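/- Let P = Σ_{j=0}^d a_j x^j be a real polynomial of degree d all of whose coefficients a_0, …, a_d are nonzero. Let p be the number of indices j with 1 ≤ j ≤ d and a_j·a_{j−1} > 0 (sign preservations), and let neg be the number of negative real roots of P counted with multiplicity. Then neg ≤ p and p − neg is an even integer. -/

import Mathlib

open Polynomial Filter


lemma sign_chain (d : ℕ) (a : ℕ → ℝ) (h : ∀ j ≤ d, a j ≠ 0) :
    (0 < a 0 * a d ↔
      Even (((Finset.Icc 1 d).filter (fun j => a j * a (j-1) < 0)).card)) := by
  induction d with
  | zero => simpa using mul_self_pos.2 (h 0 le_rfl)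
  | succ d ih =>
    have ih' := ih (fun j hj => h j (hj.trans (Nat.le_succ d)))
    have hins : Finset.Icc 1 (d+1) = insert (d+1) (Finset.Icc 1 d) := by
      rw [← Finset.insert_Icc_right_eq_Icc_add_one (by omega)]
    have h0 := h 0 (Nat.zero_le _)
    have hd := h d (Nat.le_succ d)
    have hd1 := h (d+1) le_rfl
    rw [hins, Finset.filter_insert]
    by_cases hc : a (d+1) * a (d+1-1) < 0
    · rw [if_pos hc, Finset.card_insert_of_notMem (by simp)]
      simp only [Nat.add_sub_cancel] at hc
      have key : (0 < a 0 * a (d+1)) ↔ a 0 * a d < 0 := by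
        constructor <;> intro hx <;>
          nlinarith [mul_self_pos.2 h0, mul_self_pos.2 hd, mul_self_pos.2 hd1]
      rw [key, Nat.even_add_one, ← ih']
      have hne := mul_ne_zero h0 hd
      exact ⟨fun hlt hpos => absurd hlt (asymm hpos),
        fun hnp => hne.lt_or_gt.resolve_right hnp⟩
    · rw [if_neg hc]
      simp only [Nat.add_sub_cancel] at hc
      have hcp : 0 < a (d+1) * a d := (mul_ne_zero hd1 hd).lt_or_gt.resolve_left hc
      have key : (0 < a 0 * a (d+1)) ↔ 0 < a 0 * a d := by
        constructor <;> intro hx <;>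
          nlinarith [mul_self_pos.2 h0, mul_self_pos.2 hd, mul_self_pos.2 hd1]
      rw [key, ih']


lemma neg_interleaved (p : ℝ[X]) :
    (p.roots.filter (fun x => x < 0)).toFinset.card ≤
      (((derivative p).roots.filter (fun x => x < 0)).toFinset \
        (p.roots.filter (fun x => x < 0)).toFinset).card + 1 := by
  rcases eq_or_ne (derivative p) 0 with hp' | hp'
  · rw [eq_C_of_derivative_eq_zero hp', roots_C]
    simp
  have hp : p ≠ 0 := ne_of_apply_ne derivative (by rwa [derivative_zero])
  refine Finset.card_le_diff_of_interleaved fun x hx y hy hxy hxy' => ?_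
  simp only [Multiset.mem_toFinset, Multiset.mem_filter, mem_roots hp] at hx hy
  obtain ⟨z, hz1, hz2⟩ := exists_deriv_eq_zero hxy p.continuousOn (hx.1.trans hy.1.symm)
  refine ⟨z, ?_, hz1.1, hz1.2⟩
  simp only [Multiset.mem_toFinset, Multiset.mem_filter, mem_roots hp']
  exact ⟨by rwa [IsRoot, ← p.deriv], hz1.2.trans hy.2⟩

lemma neg_card_roots_le_derivative (p : ℝ[X]) :
    Multiset.card (p.roots.filter (fun x => x < 0)) ≤
      Multiset.card ((derivative p).roots.filter (fun x => x < 0)) + 1 := by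
  rcases eq_or_ne (derivative p) 0 with hp' | hp'
  · rw [eq_C_of_derivative_eq_zero hp', roots_C]
    simp
  have hp : p ≠ 0 := ne_of_apply_ne derivative (by rwa [derivative_zero])
  set q : Multiset ℝ := p.roots.filter (fun x => x < 0) with hq
  set q' : Multiset ℝ := (derivative p).roots.filter (fun x => x < 0) with hq'
  have hcq : ∀ x ∈ q.toFinset, q.count x = p.rootMultiplicity x := by
    intro x hx
    have hx' : x < 0 := (Multiset.mem_filter.1 (Multiset.mem_toFinset.1 hx)).2
    rw [hq, Multiset.count_filter, if_pos hx', count_roots]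
  have hcq' : ∀ x : ℝ, x < 0 → q'.count x = (derivative p).rootMultiplicity x := by
    intro x hx'
    rw [hq', Multiset.count_filter, if_pos hx', count_roots]
  calc
    Multiset.card q = ∑ x ∈ q.toFinset, q.count x :=
      (Multiset.toFinset_sum_count_eq _).symm
    _ = ∑ x ∈ q.toFinset, (q.count x - 1 + 1) :=
      (Eq.symm <| Finset.sum_congr rfl fun _ hx => tsub_add_cancel_of_le <|
        Nat.succ_le_iff.2 <| Multiset.count_pos.2 <| Multiset.mem_toFinset.1 hx)
    _ = (∑ x ∈ q.toFinset, (q.count x - 1)) + q.toFinset.card := by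
      simp only [Finset.sum_add_distrib, Finset.card_eq_sum_ones]
    _ ≤ (∑ x ∈ q.toFinset, q'.count x) + ((q'.toFinset \ q.toFinset).card + 1) := by
      refine add_le_add (Finset.sum_le_sum fun x hx => ?_) (neg_interleaved p)
      have hx' : x < 0 := (Multiset.mem_filter.1 (Multiset.mem_toFinset.1 hx)).2
      rw [hcq x hx, hcq' x hx']
      exact rootMultiplicity_sub_one_le_derivative_rootMultiplicity _ _
    _ ≤ (∑ x ∈ q.toFinset, q'.count x) +
          ((∑ x ∈ q'.toFinset \ q.toFinset, q'.count x) + 1) := by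
      refine add_le_add_right (add_le_add_left ((Finset.card_eq_sum_ones _).trans_le ?_) _) _
      refine Finset.sum_le_sum fun x hx => Nat.succ_le_iff.2 <| ?_
      rw [Multiset.count_pos, ← Multiset.mem_toFinset]
      exact (Finset.mem_sdiff.1 hx).1
    _ = Multiset.card q' + 1 := by
      rw [← add_assoc, ← Finset.sum_union Finset.disjoint_sdiff,
        Finset.union_sdiff_self_eq_union, ← Multiset.toFinset_sum_count_eq, ←
        Finset.sum_subset Finset.subset_union_right]
      intro x _ hx₂
      simpa only [Multiset.mem_toFinset, Multiset.count_eq_zero] using hx₂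

lemma descartes_parity (d : ℕ) (P : Polynomial ℝ) (hdeg : P.natDegree = d)
    (hnz : ∀ j ≤ d, P.coeff j ≠ 0) :
    (P.roots.filter (fun x => x < 0)).card % 2 =
      (d + ((Finset.Icc 1 d).filter
        (fun j => P.coeff j * P.coeff (j-1) < 0)).card) % 2 := by
  have hP : P ≠ 0 := fun h => hnz 0 (Nat.zero_le d) (by simp [h])
  rcases Nat.eq_zero_or_pos d with rfl | hd1
  · have h1 : Multiset.card (P.roots.filter (fun x => x < 0)) = 0 := by
      have := (Multiset.card_le_card (Multiset.filter_le (fun x => x < 0) P.roots)).trans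
        (P.card_roots' )
      omega
    simp [h1]
  set m : Multiset ℝ := P.roots.filter (fun x => x < 0) with hm
  set k : ℕ := Multiset.card m with hk
  have hmneg : ∀ r ∈ m, r < 0 := fun r hr => (Multiset.mem_filter.1 hr).2
  set F : ℝ[X] := (m.map fun a => X - C a).prod with hF
  have hFmonic : F.Monic := monic_multiset_prod_of_monic _ _ (fun a _ => monic_X_sub_C a)
  have hFne : F ≠ 0 := hFmonic.ne_zero
  have hdvd : F ∣ P :=
    (Multiset.prod_dvd_prod_of_le (Multiset.map_le_map (Multiset.filter_le _ _))).trans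
      P.prod_multiset_X_sub_C_dvd
  obtain ⟨Q, hPQ⟩ := hdvd
  have hQ0 : Q ≠ 0 := by rintro rfl; rw [mul_zero] at hPQ; exact hP hPQ
  have hroots : P.roots = m + Q.roots := by
    rw [hPQ, roots_mul (hPQ ▸ hP), hF, roots_multiset_prod_X_sub_C]
  have hQfilter : Q.roots.filter (fun x => x < 0) = 0 := by
    have h2 : m = m + Q.roots.filter (fun x => x < 0) := by
      conv_lhs => rw [hm, hroots, Multiset.filter_add]
      congr 1
      exact Multiset.filter_eq_self.2 hmneg
    have := h2.symm
    rwa [add_eq_left] at this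
  have hQne : ∀ x : ℝ, x ≤ 0 → Q.eval x ≠ 0 := by
    intro x hx hev
    rcases lt_or_eq_of_le hx with hx' | rfl
    · have : x ∈ Q.roots.filter (fun x => x < 0) :=
        Multiset.mem_filter.2 ⟨(mem_roots hQ0).2 hev, hx'⟩
      rw [hQfilter] at this; exact absurd this (Multiset.notMem_zero x)
    · have : P.eval 0 ≠ 0 := by
        rw [← coeff_zero_eq_eval_zero]; exact hnz 0 (Nat.zero_le d)
      rw [hPQ, eval_mul, hev, mul_zero] at this; exact this rfl
  have hQsign : ∀ M : ℝ, 0 ≤ M → 0 < Q.eval (-M) * Q.eval 0 := by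
    intro M hM
    have h1 : Q.eval (-M) ≠ 0 := hQne _ (by linarith)
    have h2 : Q.eval 0 ≠ 0 := hQne _ le_rfl
    rcases (mul_ne_zero h1 h2).lt_or_gt with hlt | hpos
    · exfalso
      rcases h1.lt_or_gt with ha | ha
      · have hb : 0 < Q.eval 0 := by nlinarith
        have hmem : (0:ℝ) ∈ Set.Icc (Q.eval (-M)) (Q.eval 0) := ⟨ha.le, hb.le⟩
        obtain ⟨x, hx, hx0⟩ := intermediate_value_Icc (by linarith : -M ≤ (0:ℝ))
          Q.continuousOn hmem
        exact hQne x hx.2 hx0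
      · have hb : Q.eval 0 < 0 := by nlinarith
        have hmem : (0:ℝ) ∈ Set.Icc (Q.eval 0) (Q.eval (-M)) := ⟨hb.le, ha.le⟩
        obtain ⟨x, hx, hx0⟩ := intermediate_value_Icc' (by linarith : -M ≤ (0:ℝ))
          Q.continuousOn hmem
        exact hQne x hx.2 hx0
    · exact hpos
  have hFeval : ∀ t : ℝ, F.eval t = (m.map (fun a => t - a)).prod := by
    intro t
    rw [hF, eval_multiset_prod, Multiset.map_map]
    congr 1
    apply Multiset.map_congr rfl
    intro a _
    simp
  have hF0pos : 0 < F.eval 0 := by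
    rw [hFeval]
    apply Multiset.prod_pos
    intro b hb
    obtain ⟨a, ha, rfl⟩ := Multiset.mem_map.1 hb
    have := hmneg a ha; linarith
  -- eventual sign of P at -infinity
  set R : ℝ[X] := P.comp (-X) with hR
  have hRdeg : R.natDegree = d := by
    rw [hR, natDegree_comp]
    simp [hdeg]
  have hRlead : R.leadingCoeff = P.leadingCoeff * (-1) ^ d := by
    rw [hR, leadingCoeff_comp (by simp : (-X : ℝ[X]).natDegree ≠ 0)]
    simp [hdeg]
  have hRne : R ≠ 0 := fun h => by
    rw [h, natDegree_zero] at hRdeg; omega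
  have hRdegpos : 0 < R.degree := by
    rw [← natDegree_pos_iff_degree_pos, hRdeg]; exact hd1
  have hRevalM : ∀ x : ℝ, R.eval x = P.eval (-x) := by
    intro x; rw [hR, eval_comp]; simp
  have hlead : P.leadingCoeff ≠ 0 := leadingCoeff_ne_zero.2 hP
  have hevsign : ∀ᶠ M in atTop, 0 < ((-1 : ℝ) ^ d * P.leadingCoeff) * P.eval (-M) := by
    rcases hRlead ▸ (leadingCoeff_ne_zero.2 hRne).lt_or_gt with hneg | hpos
    · have := (tendsto_atBot_of_leadingCoeff_nonpos R hRdegpos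
        (by rw [hRlead]; linarith)).eventually_lt_atBot 0
      filter_upwards [this] with M hM
      rw [← hRevalM]
      have : ((-1 : ℝ) ^ d * P.leadingCoeff) < 0 := by
        have := hRlead; nlinarith [hM]
      exact mul_pos_of_neg_of_neg this hM
    · have := (tendsto_atTop_of_leadingCoeff_nonneg R hRdegpos
        (by rw [hRlead]; linarith)).eventually_gt_atTop 0
      filter_upwards [this] with M hM
      rw [← hRevalM]
      have : 0 < ((-1 : ℝ) ^ d * P.leadingCoeff) := by nlinarith [hM]
      exact mul_pos this hM
  have hbig : ∀ᶠ M in atTop, ∀ r ∈ m, -M < r := by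
    rw [eventually_atTop]
    refine ⟨(m.map (fun r => -r)).sum + 1, fun M hM r hr => ?_⟩
    have h1 : -r ≤ (m.map (fun r => -r)).sum := by
      apply Multiset.single_le_sum
      · intro b hb
        obtain ⟨a, ha, rfl⟩ := Multiset.mem_map.1 hb
        have := hmneg a ha; linarith
      · exact Multiset.mem_map_of_mem _ hr
    linarith
  obtain ⟨M, hMsign, hM0, hMbig⟩ :=
    (hevsign.and ((eventually_ge_atTop (0:ℝ)).and hbig)).exists
  -- sign of F at -M
  set W : ℝ := (m.map (fun a => M + a)).prod with hW
  have hWpos : 0 < W := by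
    apply Multiset.prod_pos
    intro b hb
    obtain ⟨a, ha, rfl⟩ := Multiset.mem_map.1 hb
    have := hMbig a ha; linarith
  have hFM : F.eval (-M) = (-1 : ℝ) ^ k * W := by
    rw [hFeval]
    have : m.map (fun a => -M - a) = (m.map (fun a => M + a)).map Neg.neg := by
      rw [Multiset.map_map]; apply Multiset.map_congr rfl; intro a _; simp; ring
    rw [this, Multiset.prod_map_neg]
    simp [hW, hk]
  -- combine
  have hPP : 0 < (-1 : ℝ) ^ k * (P.eval (-M) * P.eval 0) := by
    have e1 : P.eval (-M) = (-1 : ℝ) ^ k * W * Q.eval (-M) := by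
      rw [hPQ, eval_mul, hFM]
    have e2 : P.eval 0 = F.eval 0 * Q.eval 0 := by rw [hPQ, eval_mul]
    have : (-1 : ℝ) ^ k * (P.eval (-M) * P.eval 0)
        = ((-1:ℝ)^k)^2 * (W * F.eval 0 * (Q.eval (-M) * Q.eval 0)) := by
      rw [e1, e2]; ring
    rw [this]
    have h2 : (((-1:ℝ)) ^ k) ^ 2 = 1 := by
      rw [← pow_mul, mul_comm, pow_mul]; norm_num
    rw [h2, one_mul]
    exact mul_pos (mul_pos hWpos hF0pos) (hQsign M hM0)
  have hu : P.eval (-M) ≠ 0 := by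
    intro h; rw [h] at hPP; simp at hPP
  have hfinal : 0 < (-1 : ℝ) ^ (k + d) * (P.coeff 0 * P.coeff d) := by
    have ha0 : P.coeff 0 = P.eval 0 := coeff_zero_eq_eval_zero P
    have had : P.coeff d = P.leadingCoeff := by rw [leadingCoeff, hdeg]
    rw [pow_add, ha0, had]
    nlinarith [mul_pos hPP hMsign, mul_self_pos.2 hu]
  -- link to sign chain
  have hchain := sign_chain d P.coeff hnz
  have heven : Even (k + d) ↔
      Even (((Finset.Icc 1 d).filter (fun j => P.coeff j * P.coeff (j-1) < 0)).card) := by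
    rw [← hchain]
    rcases Nat.even_or_odd (k + d) with he | ho
    · rw [he.neg_one_pow, one_mul] at hfinal
      exact iff_of_true he hfinal
    · rw [ho.neg_one_pow] at hfinal
      refine iff_of_false (by simpa [Nat.odd_iff, Nat.even_iff] using ho) ?_
      intro h; nlinarith
  rw [Nat.even_iff, Nat.even_iff] at heven
  omega

lemma descartes_partition (d : ℕ) (P : Polynomial ℝ)
    (hnz : ∀ j ≤ d, P.coeff j ≠ 0) :
    ((Finset.Icc 1 d).filter (fun j => 0 < P.coeff j * P.coeff (j-1))).card +
      ((Finset.Icc 1 d).filter (fun j => P.coeff j * P.coeff (j-1) < 0)).card = d := by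
  have h1 : ((Finset.Icc 1 d).filter (fun j => ¬ 0 < P.coeff j * P.coeff (j-1)))
      = (Finset.Icc 1 d).filter (fun j => P.coeff j * P.coeff (j-1) < 0) := by
    apply Finset.filter_congr
    intro j hj
    rw [Finset.mem_Icc] at hj
    have hne : P.coeff j * P.coeff (j-1) ≠ 0 :=
      mul_ne_zero (hnz j hj.2) (hnz (j-1) (by omega))
    simp only [not_lt, eq_iff_iff]
    exact ⟨fun h => lt_of_le_of_ne h hne, fun h => h.le⟩
  rw [← h1, Finset.card_filter_add_card_filter_not, Nat.card_Icc]
  omega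

lemma descartes_ineq (d : ℕ) (P : Polynomial ℝ) (hdeg : P.natDegree = d)
    (hnz : ∀ j ≤ d, P.coeff j ≠ 0) :
    (P.roots.filter (fun x => x < 0)).card ≤
      ((Finset.Icc 1 d).filter (fun j => 0 < P.coeff j * P.coeff (j-1))).card := by
  induction d generalizing P with
  | zero =>
    have h1 := (Multiset.card_le_card (Multiset.filter_le (fun x => x < 0) P.roots)).trans
      P.card_roots'
    rw [hdeg] at h1
    omega
  | succ d ih =>
    set P' := derivative P with hP'
    have hd'lt : P'.natDegree < d + 1 := by
      rw [← hdeg]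
      exact natDegree_derivative_lt (by rw [hdeg]; omega)
    have hd'ge : d ≤ P'.natDegree := by
      apply le_natDegree_of_ne_zero
      rw [hP', coeff_derivative]
      exact mul_ne_zero (hnz (d+1) le_rfl) (by positivity)
    have hd' : P'.natDegree = d := by omega
    have hnz' : ∀ j ≤ d, P'.coeff j ≠ 0 := by
      intro j hj
      rw [hP', coeff_derivative]
      exact mul_ne_zero (hnz (j+1) (by omega)) (by positivity)
    have IH := ih P' hd' hnz'
    have rolle := neg_card_roots_le_derivative P
    rw [← hP'] at rolle
    -- p(P') equals the count over Icc 2 (d+1) for P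
    have hmap : ((Finset.Icc 1 d).filter (fun j => 0 < P'.coeff j * P'.coeff (j-1))).card
        = ((Finset.Icc 2 (d+1)).filter (fun j => 0 < P.coeff j * P.coeff (j-1))).card := by
      apply Finset.card_bij (fun j _ => j + 1)
      · intro j hj
        simp only [Finset.mem_filter, Finset.mem_Icc] at hj ⊢
        obtain ⟨⟨hj1, hj2⟩, hjs⟩ := hj
        refine ⟨⟨by omega, by omega⟩, ?_⟩
        have e1 : P'.coeff j = P.coeff (j+1) * ((j:ℝ)+1) := by
          rw [hP', coeff_derivative]
        have e2 : P'.coeff (j-1) = P.coeff j * (j:ℝ) := by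
          rw [hP', coeff_derivative]
          have h2 : j - 1 + 1 = j := by omega
          rw [h2]
          have h3 : ((j - 1 : ℕ) : ℝ) = (j:ℝ) - 1 := by
            rw [Nat.cast_sub (show 1 ≤ j by omega)]; norm_num
          rw [h3]; ring
        rw [e1, e2] at hjs
        have hjpos : (0:ℝ) < ((j:ℝ)+1) * (j:ℝ) := by
          have : (1:ℕ) ≤ j := hj1
          have : (1:ℝ) ≤ (j:ℝ) := by exact_mod_cast this
          nlinarith
        have heq : P.coeff (j+1) * ((j:ℝ)+1) * (P.coeff j * (j:ℝ))
            = (P.coeff (j+1) * P.coeff j) * (((j:ℝ)+1) * (j:ℝ)) := by ring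
        rw [heq] at hjs
        have : 0 < P.coeff (j+1) * P.coeff j := by
          by_contra hle
          push_neg at hle
          nlinarith
        simpa using this
      · intro j1 h1 j2 h2 h; omega
      · intro j hj
        simp only [Finset.mem_filter, Finset.mem_Icc] at hj
        obtain ⟨⟨hj1, hj2⟩, hjs⟩ := hj
        refine ⟨j - 1, ?_, by omega⟩
        simp only [Finset.mem_filter, Finset.mem_Icc]
        refine ⟨⟨by omega, by omega⟩, ?_⟩
        have e1 : P'.coeff (j-1) = P.coeff j * (j:ℝ) := by
          rw [hP', coeff_derivative]
          have h2 : j - 1 + 1 = j := by omega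
          rw [h2]
          have h3 : ((j - 1 : ℕ) : ℝ) = (j:ℝ) - 1 := by
            rw [Nat.cast_sub (show 1 ≤ j by omega)]; norm_num
          rw [h3]; ring
        have e2 : P'.coeff (j-1-1) = P.coeff (j-1) * ((j:ℝ)-1) := by
          rw [hP', coeff_derivative]
          have h2 : j - 1 - 1 + 1 = j - 1 := by omega
          rw [h2]
          have h3 : ((j - 1 - 1 : ℕ) : ℝ) = (j:ℝ) - 2 := by
            rw [show j - 1 - 1 = j - 2 by omega, Nat.cast_sub (show 2 ≤ j by omega)]
            norm_num
          rw [h3]; ring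
        rw [e1, e2]
        have hj1' : (2:ℝ) ≤ (j:ℝ) := by exact_mod_cast hj1
        have heq : P.coeff j * (j:ℝ) * (P.coeff (j-1) * ((j:ℝ)-1))
            = (P.coeff j * P.coeff (j-1)) * ((j:ℝ) * ((j:ℝ)-1)) := by ring
        rw [heq]
        have hpos : (0:ℝ) < (j:ℝ) * ((j:ℝ)-1) := by nlinarith
        exact mul_pos hjs hpos
    have hsub : ((Finset.Icc 2 (d+1)).filter (fun j => 0 < P.coeff j * P.coeff (j-1))).card
        ≤ ((Finset.Icc 1 (d+1)).filter (fun j => 0 < P.coeff j * P.coeff (j-1))).card := by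
      apply Finset.card_le_card
      apply Finset.filter_subset_filter
      intro x hx
      simp only [Finset.mem_Icc] at hx ⊢
      omega
    have par := descartes_parity (d+1) P hdeg hnz
    have part := descartes_partition (d+1) P hnz
    omega

/-- Descartes' rule of signs for negative roots: for a real polynomial of degree `d`
with all coefficients nonzero, the number `neg` of negative roots counted with
multiplicity satisfies `neg ≤ p` and `p - neg` is even, where `p` is the number of
sign preservations in the sequence of coefficients. -/
theorem descartes_negative_roots (d : ℕ) (P : Polynomial ℝ)
    (hdeg : P.natDegree = d)
    (hnz : ∀ j ≤ d, P.coeff j ≠ 0)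
    (p neg : ℕ)
    (hp : p = ((Finset.Icc 1 d).filter
      (fun j => 0 < P.coeff j * P.coeff (j - 1))).card)
    (hneg : neg = (P.roots.filter (fun x => x < 0)).card) :
    neg ≤ p ∧ Even (p - neg) := by
  have hineq := descartes_ineq d P hdeg hnz
  have hpar := descartes_parity d P hdeg hnz
  have hpart := descartes_partition d P hnz
  subst hp hneg
  constructor
  · exact hineq
  · rw [Nat.even_sub hineq, Nat.even_iff, Nat.even_iff]
    omega
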